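/- Let C ⊆ F2^n be a linear t-error-correcting code with information set I = {1,…,k} and parity check matrix H = (Aᵀ | Id) in standard form (so generator matrix G = (Id | A)). If y = x + e with x ∈ C and wt(e) ≤ t, then wt(H yᵀ) = wt(H eᵀ) ≤ t if and only if wt(e_I) = 0. -/

import Mathlib

lemma hn_eq_sum {n : ℕ} (f : Fin n → ZMod 2) :
    hammingNorm f = ∑ i, if f i ≠ 0 then 1 else 0 := by
  simp [hammingNorm, Finset.card_filter]

lemma hn_addCases_zero (k m : ℕ) (g : Fin m → ZMod 2) :
    hammingNorm (Fin.addCases (motive := fun _ => ZMod 2) (fun _ : Fin k => (0 : ZMod 2)) g)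
      = hammingNorm g := by
  rw [hn_eq_sum, hn_eq_sum, Fin.sum_univ_add]
  simp

lemma hn_natAdd_le (k m : ℕ) (e : Fin (k + m) → ZMod 2) :
    hammingNorm (fun i : Fin m => e (Fin.natAdd k i)) ≤ hammingNorm e := by
  rw [hn_eq_sum, hn_eq_sum, Fin.sum_univ_add]
  exact Nat.le_add_left _ _

/-- Let `C` be the binary linear `[k+m, k]` code with generator matrix
`G = (Id | A)` and parity check matrix `H = (Aᵀ | Id)`, i.e.
`C = {x : H·x = 0}`, with information set `I = {1,…,k}` (the first `k`
coordinates).  Suppose `C` is `t`-error-correcting (distinct codewords at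
Hamming distance greater than `2t`).  If `y = x + e` with `x ∈ C` and
`wt(e) ≤ t`, then `wt(H yᵀ) = wt(H eᵀ)` and this common value is `≤ t` if and
only if `wt(e_I) = 0`. -/
theorem syndrome_weight_iff_info_correct
    (k m t : ℕ) (A : Matrix (Fin k) (Fin m) (ZMod 2)) :
    let H : Matrix (Fin m) (Fin (k + m)) (ZMod 2) :=
      Matrix.of fun i => Fin.addCases (fun j => A j i) (fun j => if j = i then 1 else 0)
    let C : Set (Fin (k + m) → ZMod 2) := {x | H.mulVec x = 0}
    ∀ (hdist : ∀ c₁ ∈ C, ∀ c₂ ∈ C, c₁ ≠ c₂ → 2 * t < hammingDist c₁ c₂)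
      (x e y : Fin (k + m) → ZMod 2), x ∈ C → hammingNorm e ≤ t → y = x + e →
      hammingNorm (H.mulVec y) = hammingNorm (H.mulVec e) ∧
        (hammingNorm (H.mulVec y) ≤ t ↔ ∀ j : Fin k, e (Fin.castAdd m j) = 0) := by
  intro H C hdist x e y hx he hy
  have hx' : H.mulVec x = 0 := hx
  have hHy : H.mulVec y = H.mulVec e := by
    rw [hy, Matrix.mulVec_add, hx', zero_add]
  have hmul : ∀ (v : Fin (k + m) → ZMod 2) (i : Fin m),
      H.mulVec v i = (∑ j, A j i * v (Fin.castAdd m j)) + v (Fin.natAdd k i) := by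
    intro v i
    simp [H, Matrix.mulVec, dotProduct, Fin.sum_univ_add, ite_mul,
      Finset.sum_ite_eq, Finset.sum_ite_eq']
  set c : Fin (k + m) → ZMod 2 :=
    Fin.addCases (motive := fun _ => ZMod 2) (fun j => e (Fin.castAdd m j))
      (fun i => ∑ j, A j i * e (Fin.castAdd m j)) with hcdef
  have hcl : ∀ j, c (Fin.castAdd m j) = e (Fin.castAdd m j) := fun j => by
    simp [hcdef]
  have hcr : ∀ i, c (Fin.natAdd k i) = ∑ j, A j i * e (Fin.castAdd m j) := fun i => by
    simp [hcdef]
  have hcC : c ∈ C := by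
    show H.mulVec c = 0
    funext i
    rw [hmul c i]
    simp only [hcl, hcr]
    exact CharTwo.add_self_eq_zero _
  have hec : e + c = Fin.addCases (motive := fun _ => ZMod 2) (fun _ => 0)
      (fun i => H.mulVec e i) := by
    funext p
    induction p using Fin.addCases with
    | left j => simp [hcl, CharTwo.add_self_eq_zero]
    | right i =>
      simp only [Pi.add_apply, Fin.addCases_right, hcr, hmul e i]
      rw [add_comm]
  have hdce : hammingDist c e = hammingNorm (H.mulVec e) := by
    rw [hammingDist_eq_hammingNorm]
    have : -c + e = e + c := by
      funext p
      rw [Pi.add_apply, Pi.add_apply, Pi.neg_apply, CharTwo.neg_eq, add_comm]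
    rw [this, hec, hn_addCases_zero]
  refine ⟨hHy ▸ rfl, ?_⟩
  rw [hHy]
  constructor
  · intro hle j
    have hc0 : c = 0 := by
      by_contra hne
      have h2t := hdist c hcC 0 (by show H.mulVec 0 = 0; simp) hne
      have : hammingDist c (0 : Fin (k + m) → ZMod 2) ≤ 2 * t := by
        calc hammingDist c 0 ≤ hammingDist c e + hammingDist e 0 :=
              hammingDist_triangle _ _ _
          _ ≤ t + t := by
              rw [hdce, hammingDist_zero_right]; exact Nat.add_le_add hle he
          _ = 2 * t := (two_mul t).symm
      omega
    rw [← hcl j, hc0]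
    rfl
  · intro hI
    have hHe : H.mulVec e = fun i => e (Fin.natAdd k i) := by
      funext i
      rw [hmul e i]
      simp [hI]
    rw [hHe]
    exact le_trans (hn_natAdd_le k m e) he
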